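/- Let α be a real number whose infinite sum of base-b digit terms is α = Σ_{i=1}^∞ D_i b^(-k_i) with digits D_i ∈ {1,...,b−1} and strictly increasing exponents k_i ≥ 1. If for fixed n and base b = Π_{i=0}^n P_i we set α = Σ_{i=0}^∞ P_i^(-h(i)) with h strictly increasing, h(i) ≥ 1, then every term D_j b^(-k_j) with k_j > h(n) satisfies D_j b^(-k_j) ≤ P_{n+1}^(-h(n+1)+1). -/

import Mathlib

/-- `P i` is the `i`-th prime number (`P 0 = 2`). -/
noncomputable def P (i : ℕ) : ℕ := Nat.nth Nat.Prime i

lemma P_prime (i : ℕ) : Nat.Prime (P i) := Nat.prime_nth_prime i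

lemma P_two_le (i : ℕ) : 2 ≤ P i := (P_prime i).two_le

lemma P_mono : Monotone P := (Nat.nth_strictMono Nat.infinite_setOf_prime).monotone

lemma strictMono_add_le (h : ℕ → ℕ) (hmono : StrictMono h) (a k : ℕ) :
    h a + k ≤ h (a + k) := by
  induction k with
  | zero => simp
  | succ k ih =>
    have h1 : h (a + k) + 1 ≤ h (a + k + 1) :=
      Nat.succ_le_of_lt (hmono (Nat.lt_succ_self _))
    show h a + (k + 1) ≤ h (a + k + 1)
    omega

/-- Let `α = Σ_{i=0}^∞ P_i^(-h(i))`, fix `n` and let `b = Π_{i=0}^n P_i`. If `E` is the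
base-`b` expansion of `α`, then every nonzero term `E k · b^(-k)` at a position
`k > h n` is at most `P_{n+1}^(-h(n+1)+1)` (the tail beyond the length-`h n` expansion
of `α_n` is at most that bound). -/
theorem term_beyond_hn_le
    (h : ℕ → ℕ) (hmono : StrictMono h) (hpos : ∀ i, 1 ≤ h i)
    (n : ℕ) (b : ℕ) (hbdef : b = ∏ i ∈ Finset.range (n + 1), P i)
    (α : ℝ) (hα : α = ∑' i : ℕ, (P i : ℝ) ^ (-(h i : ℤ)))
    (E : ℕ → ℕ) (hEdigit : ∀ i, E i < b)
    (hE : ∀ m : ℕ, 1 ≤ m →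
      (∑ i ∈ Finset.Icc 1 m, (E i : ℝ) * (b : ℝ) ^ (-(i : ℤ))) ≤ α ∧
        α < (∑ i ∈ Finset.Icc 1 m, (E i : ℝ) * (b : ℝ) ^ (-(i : ℤ))) + (b : ℝ) ^ (-(m : ℤ))) :
    ∀ k : ℕ, h n < k →
      (E k : ℝ) * (b : ℝ) ^ (-(k : ℤ)) ≤ (P (n + 1) : ℝ) ^ (1 - (h (n + 1) : ℤ)) := by
  intro k hk
  -- basic facts
  have hP2 : ∀ i, (2 : ℝ) ≤ (P i : ℝ) := fun i => by exact_mod_cast P_two_le i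
  have hPpos : ∀ i, (0 : ℝ) < (P i : ℝ) := fun i => lt_of_lt_of_le two_pos (hP2 i)
  have hbpos : 0 < b := by
    rw [hbdef]
    exact Finset.prod_pos fun i _ => (P_prime i).pos
  have hbR : (0 : ℝ) < (b : ℝ) := by exact_mod_cast hbpos
  have hbne : (b : ℝ) ≠ 0 := ne_of_gt hbR
  -- rewrite α's terms as natural powers of inverses
  have hf_eq : ∀ i, (P i : ℝ) ^ (-(h i : ℤ)) = ((P i : ℝ)⁻¹) ^ (h i) := by
    intro i
    rw [zpow_neg, zpow_natCast, inv_pow]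
  set f : ℕ → ℝ := fun i => ((P i : ℝ)⁻¹) ^ (h i) with hf
  have hα' : α = ∑' i, f i := by
    rw [hα]; exact tsum_congr fun i => hf_eq i
  have hfnonneg : ∀ i, 0 ≤ f i := fun i => by positivity
  have hle_h : ∀ i : ℕ, i ≤ h i := fun i => hmono.le_apply
  -- summability
  have hfle : ∀ i, f i ≤ (1 / 2 : ℝ) ^ i := by
    intro i
    have h1 : ((P i : ℝ)⁻¹) ^ (h i) ≤ ((1 / 2 : ℝ)) ^ (h i) := by
      apply pow_le_pow_left₀ (by positivity)
      rw [one_div]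
      exact inv_anti₀ two_pos (hP2 i)
    have h2 : ((1 / 2 : ℝ)) ^ (h i) ≤ ((1 / 2 : ℝ)) ^ i :=
      pow_le_pow_of_le_one (by norm_num) (by norm_num) (hle_h i)
    exact h1.trans h2
  have hsumf : Summable f :=
    Summable.of_nonneg_of_le hfnonneg hfle summable_geometric_two
  -- split α into head and tail
  set αn : ℝ := ∑ i ∈ Finset.range (n + 1), f i with hαn
  have hsplit : αn + ∑' i, f (i + (n + 1)) = α := by
    rw [hα']; exact Summable.sum_add_tsum_nat_add (n + 1) hsumf
  have htail_nonneg : 0 ≤ ∑' i, f (i + (n + 1)) :=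
    tsum_nonneg fun i => hfnonneg _
  have hαn_le : αn ≤ α := by nlinarith [htail_nonneg, hsplit]
  -- tail bound
  set q : ℝ := (P (n + 1) : ℝ)⁻¹ with hq
  have hq0 : 0 ≤ q := by positivity
  have hqhalf : q ≤ 1 / 2 := by
    rw [hq, one_div]
    exact inv_anti₀ two_pos (hP2 (n + 1))
  have hq1 : q < 1 := lt_of_le_of_lt hqhalf (by norm_num)
  have hterm : ∀ i, f (i + (n + 1)) ≤ q ^ (h (n + 1)) * q ^ i := by
    intro i
    have hPle : (P (n + 1) : ℝ) ≤ (P (i + n + 1) : ℝ) := by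
      exact_mod_cast P_mono (by omega : n + 1 ≤ i + n + 1)
    have h1 : f (i + (n + 1)) ≤ q ^ (h (i + (n + 1))) := by
      apply pow_le_pow_left₀ (by positivity)
      exact inv_anti₀ (hPpos (n + 1)) (by rw [show i + (n+1) = i + n + 1 by ring]; exact hPle)
    have hexp : h (n + 1) + i ≤ h (i + (n + 1)) := by
      have := strictMono_add_le h hmono (n + 1) i
      rw [show n + 1 + i = i + (n + 1) by ring] at this
      exact this
    have h2 : q ^ (h (i + (n + 1))) ≤ q ^ (h (n + 1) + i) :=
      pow_le_pow_of_le_one hq0 hq1.le hexp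
    calc f (i + (n + 1)) ≤ q ^ (h (i + (n + 1))) := h1
      _ ≤ q ^ (h (n + 1) + i) := h2
      _ = q ^ (h (n + 1)) * q ^ i := pow_add q _ _
  have hsumg : Summable (fun i : ℕ => q ^ (h (n + 1)) * q ^ i) :=
    (summable_geometric_of_lt_one hq0 hq1).mul_left _
  have htail_le : (∑' i, f (i + (n + 1))) ≤ (P (n + 1) : ℝ) ^ (1 - (h (n + 1) : ℤ)) := by
    have step1 : (∑' i, f (i + (n + 1))) ≤ ∑' i : ℕ, q ^ (h (n + 1)) * q ^ i :=
      Summable.tsum_le_tsum hterm (hsumf.comp_injective (add_left_injective (n + 1))) hsumg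
    have step2 : (∑' i : ℕ, q ^ (h (n + 1)) * q ^ i) = q ^ (h (n + 1)) * (1 - q)⁻¹ := by
      rw [tsum_mul_left, tsum_geometric_of_lt_one hq0 hq1]
    have hinv2 : (1 - q)⁻¹ ≤ 2 := by
      rw [show (2 : ℝ) = (1 / 2 : ℝ)⁻¹ by norm_num]
      apply inv_anti₀ (by norm_num) (by linarith)
    have step3 : q ^ (h (n + 1)) * (1 - q)⁻¹ ≤ q ^ (h (n + 1)) * (P (n + 1) : ℝ) := by
      apply mul_le_mul_of_nonneg_left (hinv2.trans (hP2 (n + 1))) (by positivity)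
    have step4 : q ^ (h (n + 1)) * (P (n + 1) : ℝ) = (P (n + 1) : ℝ) ^ (1 - (h (n + 1) : ℤ)) := by
      rw [zpow_sub₀ (ne_of_gt (hPpos (n + 1))), zpow_one, zpow_natCast, hq, inv_pow]
      field_simp
    linarith [step1, step2.le, step3, step4.le]
  -- integrality of αn * b ^ (h n)
  have hdvd : ∀ i ∈ Finset.range (n + 1), P i ^ h i ∣ b ^ h n := by
    intro i hi
    have hPib : P i ∣ b := hbdef ▸ Finset.dvd_prod_of_mem P hi
    have h1 : P i ^ h i ∣ b ^ h i := pow_dvd_pow_of_dvd hPib _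
    have h2 : b ^ h i ∣ b ^ h n :=
      pow_dvd_pow b (hmono.monotone (by simpa using Nat.lt_succ_iff.mp (Finset.mem_range.mp hi)))
    exact h1.trans h2
  set N : ℕ := ∑ i ∈ Finset.range (n + 1), b ^ h n / P i ^ h i with hN
  have hNcast : (N : ℝ) = αn * (b : ℝ) ^ (h n) := by
    rw [hN, hαn, Nat.cast_sum, Finset.sum_mul]
    apply Finset.sum_congr rfl
    intro i hi
    rw [Nat.cast_div (hdvd i hi) (by exact_mod_cast pow_ne_zero _ (ne_of_gt (hPpos i)))]
    push_cast
    show (b:ℝ) ^ h n / (P i:ℝ) ^ h i = ((P i:ℝ))⁻¹ ^ h i * (b:ℝ) ^ h n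
    rw [inv_pow]
    field_simp
  -- set up m = k - 1
  obtain ⟨m, rfl⟩ : ∃ m, k = m + 1 := ⟨k - 1, by omega⟩
  have hm1 : 1 ≤ m := by have := hpos n; omega
  have hhnm : h n ≤ m := by omega
  set S : ℕ → ℝ := fun j => ∑ i ∈ Finset.Icc 1 j, (E i : ℝ) * (b : ℝ) ^ (-(i : ℤ)) with hS
  -- key: αn ≤ S m
  set M : ℕ := ∑ i ∈ Finset.Icc 1 m, E i * b ^ (m - i) with hM
  have hMcast : (M : ℝ) = S m * (b : ℝ) ^ m := by
    rw [hM, hS, Nat.cast_sum, Finset.sum_mul]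
    apply Finset.sum_congr rfl
    intro i hi
    have him : i ≤ m := (Finset.mem_Icc.mp hi).2
    push_cast
    rw [pow_sub₀ (b : ℝ) hbne him, zpow_neg, zpow_natCast]
    ring
  have hSm_lt := (hE m hm1).2
  have hzm : (b : ℝ) ^ (-(m : ℤ)) * (b : ℝ) ^ m = 1 := by
    rw [zpow_neg, zpow_natCast]
    field_simp
  have hbmpos : (0 : ℝ) < (b : ℝ) ^ m := by positivity
  have hlt : αn * (b : ℝ) ^ m < (M : ℝ) + 1 := by
    have h1 : αn < S m + (b : ℝ) ^ (-(m : ℤ)) := lt_of_le_of_lt hαn_le hSm_lt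
    have h2 : αn * (b : ℝ) ^ m < (S m + (b : ℝ) ^ (-(m : ℤ))) * (b : ℝ) ^ m :=
      mul_lt_mul_of_pos_right h1 hbmpos
    rw [add_mul, hzm] at h2
    rw [hMcast]
    exact h2
  have hαnm : αn * (b : ℝ) ^ m = ((N * b ^ (m - h n) : ℕ) : ℝ) := by
    push_cast
    rw [hNcast]
    rw [show (b : ℝ) ^ (m - h n) = (b : ℝ) ^ m / (b : ℝ) ^ h n by
      rw [pow_sub₀ (b : ℝ) hbne hhnm]; field_simp]
    field_simp
  have hNat : (N * b ^ (m - h n) : ℕ) < M + 1 := by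
    have := hlt
    rw [hαnm] at this
    exact_mod_cast this
  have hSm_ge : αn ≤ S m := by
    have hle : ((N * b ^ (m - h n) : ℕ) : ℝ) ≤ (M : ℝ) := by
      exact_mod_cast Nat.lt_succ_iff.mp hNat
    rw [← hαnm, hMcast] at hle
    exact le_of_mul_le_mul_right hle hbmpos
  -- conclude
  have hSk_le := (hE (m + 1) (by omega)).1
  have hSk : S (m + 1) = S m + (E (m + 1) : ℝ) * (b : ℝ) ^ (-((m + 1 : ℕ) : ℤ)) := by
    rw [hS]
    exact Finset.sum_Icc_succ_top (by omega) _
  have hterm_le : (E (m + 1) : ℝ) * (b : ℝ) ^ (-((m + 1 : ℕ) : ℤ)) ≤ α - αn := by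
    have : S (m + 1) ≤ α := hSk_le
    rw [hSk] at this
    linarith [hSm_ge]
  have htail_eq : α - αn = ∑' i, f (i + (n + 1)) := by linarith [hsplit]
  calc (E (m + 1) : ℝ) * (b : ℝ) ^ (-((m + 1 : ℕ) : ℤ)) ≤ α - αn := hterm_le
    _ = ∑' i, f (i + (n + 1)) := htail_eq
    _ ≤ (P (n + 1) : ℝ) ^ (1 - (h (n + 1) : ℤ)) := htail_le
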